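/- Let g(x) = x + (a₂/2)x² + (a₃/6)x³ + ... be an analytic odd-type expansion with g(0)=0, g'(0)=1, and suppose the function d/dx[G/g²] can be written near 0 as an analytic function f of G(x), i.e. d/dx[G(x)/g(x)²] = f(G(x)). Then necessarily a₃ = (5/3)a₂², where a₂ = g''(0) and a₃ = g'''(0). -/

import Mathlib

open Filter

private lemma analyticAt_deriv' {h : ℝ → ℝ} {x : ℝ} (hh : AnalyticAt ℝ h x) :
    AnalyticAt ℝ (deriv h) x := by
  obtain ⟨s, hs, hos⟩ := hh.exists_mem_nhds_analyticOnNhd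
  exact hos.deriv x (mem_of_mem_nhds hs)

theorem coeff_a3_relation (g : ℝ → ℝ) (hg : AnalyticAt ℝ g 0)
    (h0 : g 0 = 0) (h1 : deriv g 0 = 1)
    (G : ℝ → ℝ) (hG : ∀ x, G x = ∫ t in (0:ℝ)..x, g t)
    (f : ℝ → ℝ) (hf : AnalyticAt ℝ f 0)
    (heq : ∀ᶠ x in nhdsWithin 0 {(0:ℝ)}ᶜ,
      deriv (fun y => G y / (g y) ^ 2) x = f (G x)) :
    iteratedDeriv 3 g 0 = (5 / 3) * (iteratedDeriv 2 g 0) ^ 2 := by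
  -- derivative notations
  set g1 := deriv g with hg1def
  set g2 := deriv g1 with hg2def
  set g3 := deriv g2 with hg3def
  set g4 := deriv g3 with hg4def
  -- basic analyticity facts
  have hA : ∀ᶠ x in nhds (0:ℝ), AnalyticAt ℝ g x := hg.eventually_analyticAt
  have hA1 : ∀ᶠ x in nhds (0:ℝ), AnalyticAt ℝ g1 x := hA.mono fun x hx => analyticAt_deriv' hx
  have hA2 : ∀ᶠ x in nhds (0:ℝ), AnalyticAt ℝ g2 x := hA1.mono fun x hx => analyticAt_deriv' hx
  have hA3 : ∀ᶠ x in nhds (0:ℝ), AnalyticAt ℝ g3 x := hA2.mono fun x hx => analyticAt_deriv' hx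
  have hA4 : ∀ᶠ x in nhds (0:ℝ), AnalyticAt ℝ g4 x := hA3.mono fun x hx => analyticAt_deriv' hx
  -- FTC : G is a primitive of g near 0
  obtain ⟨ε, hε, hball⟩ := Metric.eventually_nhds_iff_ball.mp hA
  have hGfun : G = fun u => ∫ t in (0:ℝ)..u, g t := funext hG
  have hGd : ∀ᶠ x in nhds (0:ℝ), HasDerivAt G (g x) x := by
    filter_upwards [Metric.ball_mem_nhds (0:ℝ) hε] with x hx
    have hco : ContinuousOn g (Metric.ball (0:ℝ) ε) := fun y hy =>
      ((hball y hy).continuousAt).continuousWithinAt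
    have hint : IntervalIntegrable g MeasureTheory.volume 0 x := by
      apply ContinuousOn.intervalIntegrable
      apply hco.mono
      intro y hy
      exact Set.OrdConnected.uIcc_subset (convex_ball (0:ℝ) ε).ordConnected
          (Metric.mem_ball_self hε) hx hy
    have hmeas : StronglyMeasurableAtFilter g (nhds x) MeasureTheory.volume :=
      ContinuousOn.stronglyMeasurableAtFilter Metric.isOpen_ball hco x hx
    rw [hGfun]
    exact intervalIntegral.integral_hasDerivAt_right hint hmeas (hball x hx).continuousAt
  have hG0 : G 0 = 0 := by rw [hG]; simp
  -- f and its derivatives are analytic at G x for x near 0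
  have hGc : ContinuousAt G 0 := (hGd.self_of_nhds).differentiableAt.continuousAt
  have hGtend : Tendsto G (nhds 0) (nhds 0) := by
    simpa [hG0] using hGc.tendsto
  have hfa : ∀ᶠ x in nhds (0:ℝ), AnalyticAt ℝ f (G x) :=
    hGtend.eventually hf.eventually_analyticAt
  have hfa1 : ∀ᶠ x in nhds (0:ℝ), AnalyticAt ℝ (deriv f) (G x) :=
    hfa.mono fun x hx => analyticAt_deriv' hx
  have hfa2 : ∀ᶠ x in nhds (0:ℝ), AnalyticAt ℝ (deriv (deriv f)) (G x) :=
    hfa1.mono fun x hx => analyticAt_deriv' hx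
  have hfa3 : ∀ᶠ x in nhds (0:ℝ), AnalyticAt ℝ (deriv (deriv (deriv f))) (G x) :=
    hfa2.mono fun x hx => analyticAt_deriv' hx
  -- g is nonvanishing on a punctured neighborhood
  have hne : ∀ᶠ x in nhdsWithin (0:ℝ) {(0:ℝ)}ᶜ, g x ≠ 0 := by
    rcases hg.eventually_eq_zero_or_eventually_ne_zero with h | h
    · exfalso
      have hd0 : deriv g 0 = 0 := by
        rw [Filter.EventuallyEq.deriv_eq (h : g =ᶠ[nhds 0] fun _ => 0)]
        simp
      rw [hg1def, hd0] at h1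
      exact zero_ne_one h1
    · exact h
  -- the fundamental identity N = M near 0
  set N : ℝ → ℝ := fun x => g x ^ 2 - 2 * G x * g1 x with hNdef
  set M : ℝ → ℝ := fun x => f (G x) * g x ^ 3 with hMdef
  have hNM : N =ᶠ[nhds (0:ℝ)] M := by
    have key : ∀ᶠ x in nhdsWithin (0:ℝ) {(0:ℝ)}ᶜ, N x = M x := by
      filter_upwards [heq, hne, ((hA.and hGd).filter_mono nhdsWithin_le_nhds)] with x hx hgx hx2
      obtain ⟨hax, hGx⟩ := hx2
      have hg' : HasDerivAt g (g1 x) x := hax.differentiableAt.hasDerivAt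
      have hd : HasDerivAt (fun y => G y / g y ^ 2)
          ((g x * g x ^ 2 - G x * ((2:ℕ) * g x ^ 1 * g1 x)) / (g x ^ 2) ^ 2) x :=
        hGx.div (hg'.pow 2) (pow_ne_zero 2 hgx)
      rw [hd.deriv] at hx
      have h4 : (g x ^ 2) ^ 2 ≠ 0 := pow_ne_zero 2 (pow_ne_zero 2 hgx)
      have hx' : g x * g x ^ 2 - G x * (2 * g x ^ 1 * g1 x) = f (G x) * (g x ^ 2) ^ 2 := by
        field_simp at hx
        push_cast at hx
        linear_combination g x * hx
      simp only [hNdef, hMdef]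
      apply mul_left_cancel₀ hgx
      push_cast at hx'
      ring_nf
      ring_nf at hx'
      linarith [hx']
    have keyAll : ∀ᶠ x in nhds (0:ℝ), N x = M x := by
      rw [← nhdsNE_sup_pure (0:ℝ)]
      rw [eventually_sup]
      refine ⟨key, ?_⟩
      rw [eventually_pure]
      simp [hNdef, hMdef, h0, hG0]
    exact keyAll
  -- eventual HasDerivAt facts
  have hdg : ∀ᶠ x in nhds (0:ℝ), HasDerivAt g (g1 x) x :=
    hA.mono fun x hx => hx.differentiableAt.hasDerivAt
  have hdg1 : ∀ᶠ x in nhds (0:ℝ), HasDerivAt g1 (g2 x) x :=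
    hA1.mono fun x hx => hx.differentiableAt.hasDerivAt
  have hdg2 : ∀ᶠ x in nhds (0:ℝ), HasDerivAt g2 (g3 x) x :=
    hA2.mono fun x hx => hx.differentiableAt.hasDerivAt
  have hdg3 : ∀ᶠ x in nhds (0:ℝ), HasDerivAt g3 (g4 x) x :=
    hA3.mono fun x hx => hx.differentiableAt.hasDerivAt
  have hdg4 : HasDerivAt g4 (deriv g4 0) 0 :=
    hA4.self_of_nhds.differentiableAt.hasDerivAt
  have hdF0 : ∀ᶠ x in nhds (0:ℝ), HasDerivAt (fun y => f (G y)) (deriv f (G x) * g x) x := by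
    filter_upwards [hfa, hGd] with x hfx hGx
    exact (hfx.differentiableAt.hasDerivAt).comp x hGx
  have hdF1 : ∀ᶠ x in nhds (0:ℝ),
      HasDerivAt (fun y => deriv f (G y)) (deriv (deriv f) (G x) * g x) x := by
    filter_upwards [hfa1, hGd] with x hfx hGx
    exact (hfx.differentiableAt.hasDerivAt).comp x hGx
  have hdF2 : ∀ᶠ x in nhds (0:ℝ),
      HasDerivAt (fun y => deriv (deriv f) (G y)) (deriv (deriv (deriv f)) (G x) * g x) x := by
    filter_upwards [hfa2, hGd] with x hfx hGx
    exact (hfx.differentiableAt.hasDerivAt).comp x hGx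
  have hdF3 : HasDerivAt (fun y => deriv (deriv (deriv f)) (G y))
      (deriv (deriv (deriv (deriv f))) (G 0) * g 0) 0 :=
    ((hfa3.self_of_nhds).differentiableAt.hasDerivAt).comp 0 hGd.self_of_nhds
  -- the N ladder
  set N1 : ℝ → ℝ := fun x => -2 * G x * g2 x with hN1def
  set N2 : ℝ → ℝ := fun x => -2 * g x * g2 x + -2 * G x * g3 x with hN2def
  set N3 : ℝ → ℝ := fun x =>
    (-2 * g1 x * g2 x + -2 * g x * g3 x) + (-2 * g x * g3 x + -2 * G x * g4 x) with hN3def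
  have eN1 : deriv N =ᶠ[nhds (0:ℝ)] N1 := by
    filter_upwards [hdg, hdg1, hGd] with x hx h1x hGx
    have h' := (hx.pow 2).sub ((hGx.const_mul 2).mul h1x)
    have h'' : HasDerivAt N (N1 x) x := by
      rw [hNdef, hN1def]
      refine h'.congr_deriv ?_
      all_goals push_cast
      all_goals ring
    exact h''.deriv
  have eN2 : deriv N1 =ᶠ[nhds (0:ℝ)] N2 := by
    filter_upwards [hdg2, hGd] with x h2x hGx
    have h' := (hGx.const_mul (-2)).mul h2x
    have h'' : HasDerivAt N1 (N2 x) x := by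
      rw [hN1def, hN2def]
      refine h'.congr_deriv ?_
      all_goals ring
    exact h''.deriv
  have eN3 : deriv N2 =ᶠ[nhds (0:ℝ)] N3 := by
    filter_upwards [hdg, hdg2, hdg3, hGd] with x hx h2x h3x hGx
    have h' := ((hx.const_mul (-2)).mul h2x).add ((hGx.const_mul (-2)).mul h3x)
    have h'' : HasDerivAt N2 (N3 x) x := by
      rw [hN2def, hN3def]
      refine h'.congr_deriv ?_
      all_goals ring
    exact h''.deriv
  have eN : deriv (deriv (deriv N)) =ᶠ[nhds (0:ℝ)] N3 :=
    ((eN1.deriv.trans eN2).deriv).trans eN3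
  have hiterN : iteratedDeriv 3 N = deriv (deriv (deriv N)) := by
    simp [iteratedDeriv_succ, iteratedDeriv_zero]
  have hN3v : iteratedDeriv 3 N 0 = -2 * g2 0 := by
    rw [hiterN, eN.eq_of_nhds, hN3def]
    simp [h0, hG0, h1]
  have hdN3 : HasDerivAt N3
      (((-2 * g2 0) * g2 0 + (-2 * g1 0) * g3 0 + ((-2 * g1 0) * g3 0 + (-2 * g 0) * g4 0)) +
       ((-2 * g1 0) * g3 0 + (-2 * g 0) * g4 0 + ((-2 * g 0) * g4 0 + (-2 * G 0) * deriv g4 0))) 0 := by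
    rw [hN3def]
    exact (((hdg1.self_of_nhds.const_mul (-2)).mul hdg2.self_of_nhds).add
      ((hdg.self_of_nhds.const_mul (-2)).mul hdg3.self_of_nhds)).add
      (((hdg.self_of_nhds.const_mul (-2)).mul hdg3.self_of_nhds).add
      ((hGd.self_of_nhds.const_mul (-2)).mul hdg4))
  have hN4v : iteratedDeriv 4 N 0 = -2 * g2 0 ^ 2 - 6 * g3 0 := by
    rw [iteratedDeriv_succ, hiterN, Filter.EventuallyEq.deriv_eq eN, hdN3.deriv]
    rw [h0, hG0, h1]
    ring
  -- the M ladder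
  set M1 : ℝ → ℝ := fun x =>
    deriv f (G x) * g x ^ 4 + 3 * f (G x) * g x ^ 2 * g1 x with hM1def
  set M2 : ℝ → ℝ := fun x =>
    deriv (deriv f) (G x) * g x ^ 5 + 7 * deriv f (G x) * g x ^ 3 * g1 x +
      6 * f (G x) * g x * g1 x ^ 2 + 3 * f (G x) * g x ^ 2 * g2 x with hM2def
  set M3 : ℝ → ℝ := fun x =>
    deriv (deriv (deriv f)) (G x) * g x ^ 6 + 12 * deriv (deriv f) (G x) * g x ^ 4 * g1 x +
      27 * deriv f (G x) * g x ^ 2 * g1 x ^ 2 + 10 * deriv f (G x) * g x ^ 3 * g2 x +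
      6 * f (G x) * g1 x ^ 3 + 18 * f (G x) * g x * g1 x * g2 x +
      3 * f (G x) * g x ^ 2 * g3 x with hM3def
  have eM1 : deriv M =ᶠ[nhds (0:ℝ)] M1 := by
    filter_upwards [hdg, hdg1, hdF0, hdF1] with x hx h1x hF0x hF1x
    have h' := hF0x.mul (hx.pow 3)
    have h'' : HasDerivAt M (M1 x) x := by
      rw [hMdef, hM1def]
      refine h'.congr_deriv ?_
      simp only [Pi.mul_apply, Pi.pow_apply]
      all_goals push_cast
      all_goals ring
    exact h''.deriv
  have eM2 : deriv M1 =ᶠ[nhds (0:ℝ)] M2 := by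
    filter_upwards [hdg, hdg1, hdg2, hdF0, hdF1, hdF2] with x hx h1x h2x hF0x hF1x hF2x
    have h' := (hF1x.mul (hx.pow 4)).add
      (((hF0x.const_mul 3).mul (hx.pow 2)).mul h1x)
    have h'' : HasDerivAt M1 (M2 x) x := by
      rw [hM1def, hM2def]
      refine h'.congr_deriv ?_
      simp only [Pi.mul_apply, Pi.pow_apply]
      all_goals push_cast
      all_goals ring
    exact h''.deriv
  have eM3 : deriv M2 =ᶠ[nhds (0:ℝ)] M3 := by
    filter_upwards [hdg, hdg1, hdg2, hdg3, hdF0, hdF1, hdF2] with x hx h1x h2x h3x hF0x hF1x hF2x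
    have h' := (((hF2x.mul (hx.pow 5)).add
      ((((hF1x.const_mul 7).mul (hx.pow 3)).mul h1x))).add
      (((hF0x.const_mul 6).mul hx).mul (h1x.pow 2))).add
      ((((hF0x.const_mul 3).mul (hx.pow 2)).mul h2x))
    have h'' : HasDerivAt M2 (M3 x) x := by
      rw [hM2def, hM3def]
      refine h'.congr_deriv ?_
      simp only [Pi.mul_apply, Pi.pow_apply]
      all_goals push_cast
      all_goals ring
    exact h''.deriv
  have eM : deriv (deriv (deriv M)) =ᶠ[nhds (0:ℝ)] M3 :=
    ((eM1.deriv.trans eM2).deriv).trans eM3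
  have hiterM : iteratedDeriv 3 M = deriv (deriv (deriv M)) := by
    simp [iteratedDeriv_succ, iteratedDeriv_zero]
  have hM3v : iteratedDeriv 3 M 0 = 6 * f 0 := by
    rw [hiterM, eM.eq_of_nhds, hM3def]
    simp [h0, hG0, h1]
  have hdM3 := ((((((hdF3.mul (hdg.self_of_nhds.pow 6)).add
      ((((hdF2.self_of_nhds.const_mul 12)).mul (hdg.self_of_nhds.pow 4)).mul hdg1.self_of_nhds)).add
      ((((hdF1.self_of_nhds.const_mul 27)).mul (hdg.self_of_nhds.pow 2)).mul (hdg1.self_of_nhds.pow 2))).add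
      ((((hdF1.self_of_nhds.const_mul 10)).mul (hdg.self_of_nhds.pow 3)).mul hdg2.self_of_nhds)).add
      (((hdF0.self_of_nhds.const_mul 6)).mul (hdg1.self_of_nhds.pow 3))).add
      (((((hdF0.self_of_nhds.const_mul 18)).mul hdg.self_of_nhds).mul hdg1.self_of_nhds).mul hdg2.self_of_nhds)).add
      ((((hdF0.self_of_nhds.const_mul 3)).mul (hdg.self_of_nhds.pow 2)).mul hdg3.self_of_nhds)
  have hdM3' : HasDerivAt M3 (36 * g2 0 * f 0) 0 := by
    rw [hM3def]
    refine hdM3.congr_deriv ?_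
    simp only [Pi.mul_apply, Pi.pow_apply]
    all_goals rw [h0, hG0, h1]
    all_goals push_cast
    all_goals ring
  have hM4v : iteratedDeriv 4 M 0 = 36 * g2 0 * f 0 := by
    rw [iteratedDeriv_succ, hiterM, Filter.EventuallyEq.deriv_eq eM, hdM3'.deriv]
  -- conclusion
  have E3 : iteratedDeriv 3 N 0 = iteratedDeriv 3 M 0 := hNM.iteratedDeriv_eq 3
  have E4 : iteratedDeriv 4 N 0 = iteratedDeriv 4 M 0 := hNM.iteratedDeriv_eq 4
  rw [hN3v, hM3v] at E3
  rw [hN4v, hM4v] at E4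
  have i2 : iteratedDeriv 2 g 0 = g2 0 := by
    rw [hg2def, hg1def]
    simp [iteratedDeriv_succ, iteratedDeriv_zero]
  have i3 : iteratedDeriv 3 g 0 = g3 0 := by
    rw [hg3def, hg2def, hg1def]
    simp [iteratedDeriv_succ, iteratedDeriv_zero]
  rw [i2, i3]
  linear_combination (-1/6 : ℝ) * E4 + g2 0 * E3
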